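/- Let d, L ≥ 1 be integers, let Σ^{xx}, Σ^{yx} ∈ ℝ^{d×d} be diagonal with strictly positive diagonal entries, and let U ∈ ℝ^{d×d} be orthogonal. Let ω̄ : ℝ → ℝ^{d×d} be differentiable, with ω̄(t) diagonal with strictly positive diagonal entries for every t, satisfying ω̄'(t) = L(ω̄(t)^{3−1/L} Σ^{yx} − ω̄(t)³ Σ^{xx}), where fractional powers of the positive diagonal matrix ω̄(t) are taken entrywise on the diagonal. Define W̄(t) = U ω̄(t) and V(t) = U ω̄(t)^{1/L} Uᵀ. Then for all t: d/dt V(t) = W̄(t) Σ^{yx} W̄(t)ᵀ − V(t) W̄(t) Σ^{xx} W̄(t)ᵀ. -/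

import Mathlib

open Matrix

/-- Entrywise (diagonal) real power of a diagonal matrix with positive diagonal:
`(diagRpow A r) i i = (A i i) ^ r` and the off-diagonal entries vanish. -/
noncomputable def diagRpow {d : ℕ} (A : Matrix (Fin d) (Fin d) ℝ) (r : ℝ) :
    Matrix (Fin d) (Fin d) ℝ :=
  Matrix.of fun i j => if i = j then A i i ^ r else 0

lemma diagRpow_isDiag {d : ℕ} (A : Matrix (Fin d) (Fin d) ℝ) (r : ℝ) :
    (diagRpow A r).IsDiag := by
  intro i j hij
  simp [diagRpow, hij]

lemma diagRpow_apply {d : ℕ} (A : Matrix (Fin d) (Fin d) ℝ) (r : ℝ) (i : Fin d) :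
    diagRpow A r i i = A i i ^ r := by simp [diagRpow]

/-- Left multiplication by a diagonal matrix, entrywise. -/
lemma diag_mul_apply {d : ℕ} {A B : Matrix (Fin d) (Fin d) ℝ} (hA : A.IsDiag)
    (i j : Fin d) : (A * B) i j = A i i * B i j := by
  rw [Matrix.mul_apply, Finset.sum_eq_single i]
  · intro b _ hb
    rw [hA (Ne.symm hb), zero_mul]
  · intro h; exact absurd (Finset.mem_univ i) h

/-- Right multiplication by a diagonal matrix, entrywise. -/
lemma mul_diag_apply {d : ℕ} {A B : Matrix (Fin d) (Fin d) ℝ} (hB : B.IsDiag)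
    (i j : Fin d) : (A * B) i j = A i j * B j j := by
  rw [Matrix.mul_apply, Finset.sum_eq_single j]
  · intro b _ hb
    rw [hB hb, mul_zero]
  · intro h; exact absurd (Finset.mem_univ j) h

/-- The sandwich `U A B (U W)ᵀ` with `A, B, W` diagonal, entrywise. -/
lemma sandwich_apply {d : ℕ} (U A B W : Matrix (Fin d) (Fin d) ℝ)
    (hA : A.IsDiag) (hB : B.IsDiag) (hW : W.IsDiag) (i j : Fin d) :
    (U * A * B * (U * W)ᵀ) i j = ∑ k, U i k * A k k * B k k * W k k * U j k := by
  rw [Matrix.mul_apply]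
  refine Finset.sum_congr rfl fun k _ => ?_
  rw [mul_diag_apply hB, mul_diag_apply hA, Matrix.transpose_apply,
    mul_diag_apply hW]
  ring

lemma key_scalar (L : ℕ) (hL : 1 ≤ L) (ω s x : ℝ) (hω : 0 < ω) :
    (L : ℝ) * (ω ^ ((3 : ℝ) - 1 / L) * s - ω ^ (3 : ℕ) * x) * ((1 : ℝ) / L)
        * ω ^ ((1 : ℝ) / L - 1)
      = ω * s * ω - ω ^ ((1 : ℝ) / L) * ω * x * ω := by
  have hLne : (L : ℝ) ≠ 0 := Nat.cast_ne_zero.mpr (by omega)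
  have h1 : ω ^ ((3 : ℝ) - 1 / L) * ω ^ ((1 : ℝ) / L - 1) = ω * ω := by
    rw [← Real.rpow_add hω,
      show (3 : ℝ) - 1 / L + ((1 : ℝ) / L - 1) = ((2 : ℕ) : ℝ) by push_cast; ring,
      Real.rpow_natCast]
    ring
  have h2 : ω ^ (3 : ℕ) * ω ^ ((1 : ℝ) / L - 1) = ω ^ ((1 : ℝ) / L) * ω * ω := by
    rw [← Real.rpow_natCast ω 3, ← Real.rpow_add hω,
      show ((3 : ℕ) : ℝ) + ((1 : ℝ) / L - 1) = (1 : ℝ) / L + ((2 : ℕ) : ℝ) by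
        push_cast; ring,
      Real.rpow_add hω, Real.rpow_natCast]
    ring
  have expand : (L : ℝ) * (ω ^ ((3 : ℝ) - 1 / L) * s - ω ^ (3 : ℕ) * x) * ((1 : ℝ) / L)
      * ω ^ ((1 : ℝ) / L - 1)
      = (ω ^ ((3 : ℝ) - 1 / L) * ω ^ ((1 : ℝ) / L - 1)) * s
        - (ω ^ (3 : ℕ) * ω ^ ((1 : ℝ) / L - 1)) * x := by
    field_simp
  rw [expand, h1, h2]
  ring

theorem jepa_ansatz_decoder (d L : ℕ) (hd : 1 ≤ d) (hL : 1 ≤ L)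
    (Sxx Syx : Matrix (Fin d) (Fin d) ℝ)
    (hSxx_diag : Sxx.IsDiag) (hSyx_diag : Syx.IsDiag)
    (hSxx_pos : ∀ i, 0 < Sxx i i) (hSyx_pos : ∀ i, 0 < Syx i i)
    (U : Matrix (Fin d) (Fin d) ℝ) (hU_orth : Uᵀ * U = 1)
    (ωbar : ℝ → Matrix (Fin d) (Fin d) ℝ)
    (hdiag : ∀ t, (ωbar t).IsDiag) (hpos : ∀ t i, 0 < ωbar t i i)
    (hode : ∀ (t : ℝ) (i j : Fin d),
      HasDerivAt (fun s => ωbar s i j)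
        ((L : ℝ) *
          ((diagRpow (ωbar t) ((3 : ℝ) - 1 / L) * Syx - ωbar t ^ 3 * Sxx) i j)) t) :
    ∀ (t : ℝ) (i j : Fin d),
      HasDerivAt (fun s => (U * diagRpow (ωbar s) ((1 : ℝ) / L) * Uᵀ) i j)
        (((U * ωbar t) * Syx * (U * ωbar t)ᵀ
          - (U * diagRpow (ωbar t) ((1 : ℝ) / L) * Uᵀ) * (U * ωbar t) * Sxx
            * (U * ωbar t)ᵀ) i j) t := by
  intro t i j
  set D := diagRpow (ωbar t) ((1 : ℝ) / L) with hD
  -- the function in entrywise form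
  have hfun : ∀ s, (U * diagRpow (ωbar s) ((1 : ℝ) / L) * Uᵀ) i j
      = ∑ k, U i k * (ωbar s k k ^ ((1 : ℝ) / L)) * U j k := by
    intro s
    rw [Matrix.mul_apply]
    refine Finset.sum_congr rfl fun k _ => ?_
    rw [mul_diag_apply (diagRpow_isDiag _ _), Matrix.transpose_apply,
      diagRpow_apply]
  -- per-coordinate derivative
  have hderiv : ∀ k : Fin d,
      HasDerivAt (fun s => U i k * (ωbar s k k ^ ((1 : ℝ) / L)) * U j k)
        (U i k * (((L : ℝ) *
            ((diagRpow (ωbar t) ((3 : ℝ) - 1 / L) * Syx - ωbar t ^ 3 * Sxx) k k))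
          * ((1 : ℝ) / L) * (ωbar t k k) ^ ((1 : ℝ) / L - 1)) * U j k) t := by
    intro k
    have h0 := (hode t k k).rpow_const (p := (1 : ℝ) / L)
      (Or.inl (ne_of_gt (hpos t k)))
    exact (h0.const_mul (U i k)).mul_const (U j k)
  have hsum := HasDerivAt.fun_sum (fun k (_ : k ∈ Finset.univ) => hderiv k)
  have hsum' : HasDerivAt (fun s => (U * diagRpow (ωbar s) ((1 : ℝ) / L) * Uᵀ) i j)
      (∑ k, U i k * (((L : ℝ) *
          ((diagRpow (ωbar t) ((3 : ℝ) - 1 / L) * Syx - ωbar t ^ 3 * Sxx) k k))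
        * ((1 : ℝ) / L) * (ωbar t k k) ^ ((1 : ℝ) / L - 1)) * U j k) t := by
    refine hsum.congr_of_eventuallyEq ?_
    filter_upwards with s using hfun s
  convert hsum' using 1
  -- now compute the matrix entry of the RHS
  have hVW : U * D * Uᵀ * (U * ωbar t) = U * (D * ωbar t) := by
    calc U * D * Uᵀ * (U * ωbar t) = U * D * (Uᵀ * U) * ωbar t := by
          noncomm_ring
      _ = U * (D * ωbar t) := by rw [hU_orth, Matrix.mul_one, Matrix.mul_assoc]
  have hDdiag : D.IsDiag := diagRpow_isDiag _ _
  have hDw : (D * ωbar t).IsDiag := by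
    intro a b hab
    rw [mul_diag_apply (hdiag t)]
    rw [hDdiag hab, zero_mul]
  have h1 : ((U * ωbar t) * Syx * (U * ωbar t)ᵀ) i j
      = ∑ k, U i k * ωbar t k k * Syx k k * ωbar t k k * U j k := by
    exact sandwich_apply U (ωbar t) Syx (ωbar t) (hdiag t) hSyx_diag (hdiag t) i j
  have h2 : ((U * D * Uᵀ) * (U * ωbar t) * Sxx * (U * ωbar t)ᵀ) i j
      = ∑ k, U i k * (D k k * ωbar t k k) * Sxx k k * ωbar t k k * U j k := by
    rw [hVW]
    have := sandwich_apply U (D * ωbar t) Sxx (ωbar t) hDw hSxx_diag (hdiag t) i j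
    rw [this]
    refine Finset.sum_congr rfl fun k _ => ?_
    rw [mul_diag_apply (hdiag t)]
  rw [Matrix.sub_apply, h1, h2, ← Finset.sum_sub_distrib]
  refine Finset.sum_congr rfl fun k _ => ?_
  have hωpos := hpos t k
  -- compute the ODE entry
  have hcube : (ωbar t ^ 3) k k = ωbar t k k ^ (3 : ℕ) := by
    have h3 : ωbar t ^ 3 = ωbar t * ωbar t * ωbar t := by
      rw [pow_succ, pow_succ, pow_one]
    rw [h3, mul_diag_apply (hdiag t), mul_diag_apply (hdiag t)]
    ring
  have hentry : (diagRpow (ωbar t) ((3 : ℝ) - 1 / L) * Syx - ωbar t ^ 3 * Sxx) k k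
      = ωbar t k k ^ ((3 : ℝ) - 1 / L) * Syx k k
        - ωbar t k k ^ (3 : ℕ) * Sxx k k := by
    rw [Matrix.sub_apply, diag_mul_apply (diagRpow_isDiag _ _), diagRpow_apply,
      mul_diag_apply hSxx_diag, hcube]
  rw [hentry, hD, diagRpow_apply, key_scalar L hL _ _ _ hωpos]
  ring
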